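/- For every natural number n ≥ 3, the subgroup A_n is a characteristic subgroup of G_n, i.e., α(A_n) = A_n for every automorphism α of G_n. -/

import Mathlib

/-- The defining relations of the combinatorial Hantzsche-Wendt group `G_n`:
`x_i⁻¹ x_j² x_i = x_j⁻²` for all `i ≠ j`, written as relators. -/
def HWrels (n : ℕ) : Set (FreeGroup (Fin n)) :=
  {r | ∃ i j : Fin n, i ≠ j ∧
    r = (FreeGroup.of i)⁻¹ * FreeGroup.of j ^ 2 * FreeGroup.of i * FreeGroup.of j ^ 2}

/-- The combinatorial Hantzsche-Wendt group `G_n`. -/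
abbrev HW (n : ℕ) : Type := PresentedGroup (HWrels n)

/-- The generators `x_1, …, x_n` of `G_n`. -/
def x (n : ℕ) (i : Fin n) : HW n := PresentedGroup.of i

/-- For an `n × n` integer matrix `𝔞 = [a_ij]`, the element
`a_i = (x_1²)^{a_i1} ⋯ (x_n²)^{a_in}` of `A_n ≤ G_n`. -/
def aElt (n : ℕ) (𝔞 : Matrix (Fin n) (Fin n) ℤ) (i : Fin n) : HW n :=
  ((List.finRange n).map fun j => (x n j ^ 2) ^ 𝔞 i j).prod

/-- The subgroup `A_n = ⟨x_1², …, x_n²⟩` of `G_n`. -/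
def A (n : ℕ) : Subgroup (HW n) := Subgroup.closure (Set.range fun i => x n i ^ 2)

open Monoid


namespace HWaux1

abbrev C2 := Multiplicative (ZMod 2)
abbrev gen : C2 := Multiplicative.ofAdd 1

lemma gen_ne_one : gen ≠ 1 := by decide
lemma gen_mul_gen : gen * gen = 1 := by decide
lemma c2_cases (m : C2) : m = 1 ∨ m = gen := by revert m; decide

variable {n : ℕ}

abbrev Mfam (n : ℕ) : Fin n → Type := fun _ => C2

lemma word_prod_injective :
    Function.Injective (CoprodI.Word.prod : CoprodI.Word (Mfam n) → CoprodI (Mfam n)) :=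
  fun a b hab => (CoprodI.Word.equiv (M := Mfam n)).symm.injective hab

lemma neword_prod_ne {i j p : Fin n} (w : CoprodI.NeWord (Mfam n) i j)
    (hpi : p ≠ i) (hjp : j ≠ p) :
    w.prod * CoprodI.of (i := p) gen * w.prod * CoprodI.of (i := p) gen ≠
      CoprodI.of (i := p) gen * w.prod * CoprodI.of (i := p) gen * w.prod := by
  set s : CoprodI.NeWord (Mfam n) p p := CoprodI.NeWord.singleton (i := p) gen gen_ne_one with hs
  set w₁ : CoprodI.NeWord (Mfam n) i p := ((w.append hjp s).append hpi w).append hjp s with hw₁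
  set w₂ : CoprodI.NeWord (Mfam n) p j := ((s.append hpi w).append hjp s).append hpi w with hw₂
  have h1 : w₁.prod = w.prod * CoprodI.of (i := p) gen * w.prod * CoprodI.of (i := p) gen := by
    simp [hw₁, CoprodI.NeWord.append_prod, CoprodI.NeWord.prod_singleton, hs, mul_assoc]
  have h2 : w₂.prod = CoprodI.of (i := p) gen * w.prod * CoprodI.of (i := p) gen * w.prod := by
    simp [hw₂, CoprodI.NeWord.append_prod, CoprodI.NeWord.prod_singleton, hs, mul_assoc]
  intro h
  have heq : w₁.toWord = w₂.toWord := word_prod_injective (by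
    show w₁.toWord.prod = w₂.toWord.prod
    rw [← CoprodI.NeWord.prod, ← CoprodI.NeWord.prod, h1, h2, h])
  have hl : w₁.toList = w₂.toList := congrArg CoprodI.Word.toList heq
  have hh1 := CoprodI.NeWord.toList_head? w₁
  have hh2 := CoprodI.NeWord.toList_head? w₂
  rw [hl, hh2] at hh1
  have : (⟨p, w₂.head⟩ : Σ k, Mfam n k) = ⟨i, w₁.head⟩ := by
    injection hh1
  exact hpi (congrArg Sigma.fst this)

lemma coprodI_trivial (hn : 3 ≤ n) (g : CoprodI (Mfam n))
    (hg : ∀ h, Commute g (h * g * h⁻¹)) : g = 1 := by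
  by_contra hne
  have hw : (CoprodI.Word.equiv (M := Mfam n) g).prod = g :=
    (CoprodI.Word.equiv (M := Mfam n)).left_inv g
  have hwne : CoprodI.Word.equiv (M := Mfam n) g ≠ CoprodI.Word.empty := by
    intro h
    exact hne (by rw [← hw, h, CoprodI.Word.prod_empty])
  obtain ⟨i, j, w', hw'⟩ := CoprodI.NeWord.of_word _ hwne
  have hprod : w'.prod = g := by rw [CoprodI.NeWord.prod, hw', hw]
  obtain ⟨p, hp⟩ : ∃ p : Fin n, p ∉ ({i, j} : Finset (Fin n)) := by
    by_contra hc
    push_neg at hc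
    have hsub : (Finset.univ : Finset (Fin n)) ⊆ {i, j} := fun p _ => hc p
    have := Finset.card_le_card hsub
    have h2 : ({i, j} : Finset (Fin n)).card ≤ 2 :=
      le_trans (Finset.card_insert_le _ _) (by simp)
    simp only [Finset.card_univ, Fintype.card_fin] at this
    omega
  simp only [Finset.mem_insert, Finset.mem_singleton, not_or] at hp
  have hcomm := hg (CoprodI.of (M := Mfam n) (i := p) gen)
  have hinv : (CoprodI.of (M := Mfam n) (i := p) gen)⁻¹ = CoprodI.of (M := Mfam n) (i := p) gen := by
    rw [← map_inv]
    have : (gen : C2)⁻¹ = gen := by decide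
    rw [this]
  rw [hinv] at hcomm
  apply neword_prod_ne w' hp.1 (fun h => hp.2 h.symm) (p := p)
  rw [hprod]
  have := hcomm.eq
  -- g * (h*g*h) = (h*g*h) * g
  simpa [mul_assoc] using this


end HWaux1

namespace HWaux1

/-- hom out of C2 determined by an involution -/
def homC2 {G : Type*} [Group G] (t : G) (ht : t * t = 1) : C2 →* G where
  toFun m := if m = 1 then 1 else t
  map_one' := if_pos rfl
  map_mul' a b := by
    rcases c2_cases a with ha | ha <;> rcases c2_cases b with hb | hb <;> subst ha <;> subst hb <;>
      simp [gen_mul_gen, gen_ne_one, ht]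

lemma homC2_gen {G : Type*} [Group G] (t : G) (ht : t * t = 1) : homC2 t ht gen = t := by
  simp [homC2, gen_ne_one]

end HWaux1

namespace HWaux2

variable {n : ℕ}

lemma sq_mem_A (i : Fin n) : x n i ^ 2 ∈ A n :=
  Subgroup.subset_closure ⟨i, rfl⟩

lemma rel_hw {i j : Fin n} (h : i ≠ j) :
    (x n i)⁻¹ * x n j ^ 2 * x n i * x n j ^ 2 = 1 := by
  have hmem : ((FreeGroup.of i)⁻¹ * FreeGroup.of j ^ 2 * FreeGroup.of i * FreeGroup.of j ^ 2 :
      FreeGroup (Fin n)) ∈ Subgroup.normalClosure (HWrels n) :=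
    Subgroup.subset_normalClosure ⟨i, j, h, rfl⟩
  have : PresentedGroup.mk (HWrels n)
      ((FreeGroup.of i)⁻¹ * FreeGroup.of j ^ 2 * FreeGroup.of i * FreeGroup.of j ^ 2) = 1 :=
    (QuotientGroup.eq_one_iff _).mpr hmem
  simpa [map_mul, map_pow, map_inv, x, PresentedGroup.of] using this

lemma conj_sq {i j : Fin n} (h : i ≠ j) :
    (x n i)⁻¹ * x n j ^ 2 * x n i = (x n j ^ 2)⁻¹ := by
  have := rel_hw h
  rw [← mul_eq_one_iff_eq_inv] at *
  exact this

lemma inv_conj_sq {i j : Fin n} (h : i ≠ j) :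
    (x n i)⁻¹ * (x n j ^ 2)⁻¹ * x n i = x n j ^ 2 := by
  have h1 := conj_sq h
  have := congrArg (·⁻¹) h1
  simpa [mul_inv_rev, mul_assoc] using this

lemma conj_sq' {i j : Fin n} (h : i ≠ j) :
    x n i * x n j ^ 2 * (x n i)⁻¹ = (x n j ^ 2)⁻¹ := by
  have h2 := inv_conj_sq h
  conv_lhs => rw [← h2]
  group

lemma comm_sq (i j : Fin n) : Commute (x n i ^ 2) (x n j ^ 2) := by
  by_cases h : i = j
  · subst h; exact Commute.refl _
  · have e1 := conj_sq h
    have e2 := inv_conj_sq h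
    have e3 : (x n i ^ 2)⁻¹ * x n j ^ 2 * x n i ^ 2 = x n j ^ 2 := by
      have : (x n i ^ 2)⁻¹ * x n j ^ 2 * x n i ^ 2
          = (x n i)⁻¹ * ((x n i)⁻¹ * x n j ^ 2 * x n i) * x n i := by
        rw [pow_two]; group
      rw [this, e1, e2]
    show x n i ^ 2 * x n j ^ 2 = x n j ^ 2 * x n i ^ 2
    conv_lhs => rw [← e3]
    group

lemma conj_gen_mem (k j : Fin n) :
    x n k * x n j ^ 2 * (x n k)⁻¹ ∈ A n ∧ (x n k)⁻¹ * x n j ^ 2 * x n k ∈ A n := by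
  by_cases h : k = j
  · subst h
    have e1 : x n k * x n k ^ 2 * (x n k)⁻¹ = x n k ^ 2 := by group
    have e2 : (x n k)⁻¹ * x n k ^ 2 * x n k = x n k ^ 2 := by group
    exact ⟨by rw [e1]; exact sq_mem_A k, by rw [e2]; exact sq_mem_A k⟩
  · exact ⟨by rw [conj_sq' h]; exact (A n).inv_mem (sq_mem_A j),
      by rw [conj_sq h]; exact (A n).inv_mem (sq_mem_A j)⟩

lemma conj_set_le {G : Type*} [Group G] (g : G) (S : Set G)
    (h : ∀ s ∈ S, g * s * g⁻¹ ∈ Subgroup.closure S) :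
    ∀ a ∈ Subgroup.closure S, g * a * g⁻¹ ∈ Subgroup.closure S := by
  intro a ha
  have hmap : Subgroup.map (MulAut.conj g).toMonoidHom (Subgroup.closure S) ≤
      Subgroup.closure S := by
    rw [MonoidHom.map_closure]
    apply Subgroup.closure_le _ |>.mpr
    rintro _ ⟨s, hs, rfl⟩
    simpa [MulAut.conj_apply] using h s hs
  exact hmap ⟨a, ha, rfl⟩

lemma conj_mem_A (g : HW n) : ∀ a ∈ A n, g * a * g⁻¹ ∈ A n := by
  have key : ∀ g : HW n,
      (∀ a ∈ A n, g * a * g⁻¹ ∈ A n) ∧ (∀ a ∈ A n, g⁻¹ * a * g ∈ A n) := by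
    intro g
    induction g using PresentedGroup.induction_on with
    | H z =>
      induction z using FreeGroup.induction_on with
      | C1 => simp
      | of k =>
        constructor
        · apply conj_set_le
          rintro _ ⟨j, rfl⟩
          exact (conj_gen_mem k j).1
        · intro a ha
          have := conj_set_le ((PresentedGroup.mk (HWrels n)) (FreeGroup.of k))⁻¹ _
            (by rintro _ ⟨j, rfl⟩
                simpa [x, PresentedGroup.of, A] using (conj_gen_mem k j).2) a ha
          simpa [A] using this
      | inv_of k ih =>
        refine ⟨fun a ha => ?_, fun a ha => ?_⟩
        · simpa using ih.2 a ha
        · simpa using ih.1 a ha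
      | mul y z ihy ihz =>
        refine ⟨fun a ha => ?_, fun a ha => ?_⟩
        · have h1 := ihz.1 a ha
          have h2 := ihy.1 _ h1
          simpa [map_mul, mul_assoc] using h2
        · have h1 := ihy.2 a ha
          have h2 := ihz.2 _ h1
          simpa [map_mul, mul_assoc] using h2
  exact (key g).1

instance A_normal : (A n).Normal := ⟨fun a ha g => conj_mem_A g a ha⟩

lemma A_comm : ∀ a ∈ A n, ∀ b ∈ A n, Commute a b := by
  have hSS : (Set.range fun i => x n i ^ 2) ⊆
      ↑(Subgroup.centralizer (Set.range fun i => x n i ^ 2)) := by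
    rintro _ ⟨i, rfl⟩
    simp only [SetLike.mem_coe]
    rw [Subgroup.mem_centralizer_iff]
    rintro _ ⟨j, rfl⟩
    exact (comm_sq j i).eq
  have h1 : A n ≤ Subgroup.centralizer (Set.range fun i => x n i ^ 2) :=
    (Subgroup.closure_le _).mpr hSS
  have h2 : A n ≤ Subgroup.centralizer (A n : Set (HW n)) := by
    apply (Subgroup.closure_le _).mpr
    rintro _ ⟨i, rfl⟩
    simp only [SetLike.mem_coe]
    rw [Subgroup.mem_centralizer_iff]
    intro a ha
    exact ((h1 ha) _ ⟨i, rfl⟩).symm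
  intro a ha b hb
  exact Subgroup.mem_centralizer_iff.mp (h2 hb) a ha

end HWaux2

namespace HWfinal
open HWaux1 HWaux2

variable {n : ℕ}

lemma relsat : ∀ r ∈ HWrels n,
    FreeGroup.lift (fun i : Fin n => CoprodI.of (M := Mfam n) (i := i) gen) r = 1 := by
  rintro r ⟨i, j, hij, rfl⟩
  simp only [map_mul, map_inv, map_pow, FreeGroup.lift_apply_of]
  have h2 : CoprodI.of (M := Mfam n) (i := j) gen ^ 2 = 1 := by
    rw [pow_two, ← map_mul, gen_mul_gen, map_one]
  rw [h2]
  group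

def pi (n : ℕ) : HW n →* CoprodI (Mfam n) := PresentedGroup.toGroup relsat

lemma pi_x (i : Fin n) : pi n (x n i) = CoprodI.of (M := Mfam n) (i := i) gen :=
  PresentedGroup.toGroup.of _

lemma pi_surj : Function.Surjective (pi n) := by
  intro c
  refine CoprodI.induction_on c ⟨1, map_one _⟩ (fun i m => ?_) ?_
  · rcases c2_cases m with h | h <;> subst h
    · exact ⟨1, by rw [map_one, map_one]⟩
    · exact ⟨x n i, pi_x i⟩
  · rintro a b ⟨u, rfl⟩ ⟨v, rfl⟩
    exact ⟨u * v, map_mul _ _ _⟩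

lemma mkx_sq (i : Fin n) :
    QuotientGroup.mk' (A n) (x n i) * QuotientGroup.mk' (A n) (x n i) = 1 := by
  rw [← map_mul, ← pow_two]
  exact (QuotientGroup.eq_one_iff _).mpr (sq_mem_A i)

def phi (n : ℕ) : CoprodI (Mfam n) →* HW n ⧸ A n :=
  CoprodI.lift fun i => homC2 (QuotientGroup.mk' (A n) (x n i)) (mkx_sq i)

lemma phi_pi : (phi n).comp (pi n) = QuotientGroup.mk' (A n) := by
  apply PresentedGroup.ext
  intro i
  show phi n (pi n (x n i)) = QuotientGroup.mk' (A n) (x n i)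
  rw [pi_x, phi, CoprodI.lift_of, homC2_gen]

lemma ker_le {g : HW n} (hg : pi n g = 1) : g ∈ A n := by
  have h1 : QuotientGroup.mk' (A n) g = 1 := by
    rw [← phi_pi, MonoidHom.comp_apply, hg, map_one]
  exact (QuotientGroup.eq_one_iff g).mp h1

lemma mem_A_of_comm (hn : 3 ≤ n) (g : HW n)
    (hg : ∀ h : HW n, Commute g (h * g * h⁻¹)) : g ∈ A n := by
  apply ker_le
  apply coprodI_trivial hn
  intro h'
  obtain ⟨h, rfl⟩ := pi_surj h'
  have := (hg h).map (pi n)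
  simpa [map_mul, map_inv] using this

lemma comm_of_mem_A {g : HW n} (hg : g ∈ A n) (h : HW n) :
    Commute g (h * g * h⁻¹) :=
  A_comm g hg _ (conj_mem_A h g hg)

end HWfinal

/-- for `n ≥ 3`, `A_n` is a characteristic subgroup of `G_n`. -/
theorem stmt7 (n : ℕ) (hn : 3 ≤ n) (α : HW n ≃* HW n) :
    (A n).map α.toMonoidHom = A n := by
  have key : ∀ β : HW n ≃* HW n, (A n).map β.toMonoidHom ≤ A n := by
    intro β
    rintro _ ⟨g, hg, rfl⟩
    apply HWfinal.mem_A_of_comm hn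
    intro h
    have hc := (HWfinal.comm_of_mem_A hg (β.symm h)).map β.toMonoidHom
    simpa [map_mul, map_inv, β.apply_symm_apply] using hc
  refine le_antisymm (key α) ?_
  intro a ha
  exact Subgroup.mem_map.mpr ⟨α.symm a, key α.symm (Subgroup.mem_map.mpr ⟨a, ha, rfl⟩),
    α.apply_symm_apply a⟩
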